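/- arXiv:1606.06301 — 3 statements merged into one kernel-verified Lean document; each statement's English description precedes it below -/
import Mathlib

section
/- Let ω be a unit vector in ℂ^(Fin m × Fin n), O an m×m complex matrix, B an invertible n×n complex matrix, and set P = (B⁻¹)ᴴ B⁻¹. Suppose the clustering bound |⟨ω, (O ⊗ₖ P) ω⟩ − ⟨ω, (O ⊗ₖ 1) ω⟩ · ⟨ω, (1 ⊗ₖ P) ω⟩| ≤ ε · ‖O‖ · ‖P‖ holds for some ε ≥ 0. Then, with ω' = (1 ⊗ₖ B⁻¹) ω / ‖(1 ⊗ₖ B⁻¹) ω‖, one has |⟨ω', (O ⊗ₖ 1) ω'⟩ − ⟨ω, (O ⊗ₖ 1) ω⟩| ≤ ε · ‖O‖ · (‖B‖ · ‖B⁻¹‖)². -/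
open Matrix
open scoped Kronecker ComplexInnerProductSpace
open scoped Matrix.Norms.L2Operator

set_option maxHeartbeats 1000000

/-- The `ℓ² → ℓ²` operator norm of a complex matrix. -/
noncomputable def l2opNorm {m n : Type*} [Fintype m] [Fintype n] [DecidableEq n]
    (M : Matrix m n ℂ) : ℝ :=
  ‖LinearMap.toContinuousLinearMap (Matrix.toEuclideanLin M)‖

lemma l2opNorm_eq_norm {m n : Type*} [Fintype m] [Fintype n] [DecidableEq n]
    (M : Matrix m n ℂ) : l2opNorm M = ‖M‖ := rfl

lemma kron_conjT {m n : ℕ} (X : Matrix (Fin m) (Fin m) ℂ) (Y : Matrix (Fin n) (Fin n) ℂ) :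
    (X ⊗ₖ Y)ᴴ = Xᴴ ⊗ₖ Yᴴ := by
  ext ⟨i, j⟩ ⟨i', j'⟩
  simp [conjTranspose_apply, mul_comm]

lemma norm_one_kron_le (m n : ℕ) (B : Matrix (Fin n) (Fin n) ℂ) :
    ‖((1 : Matrix (Fin m) (Fin m) ℂ) ⊗ₖ B)‖ ≤ ‖B‖ := by
  rw [l2_opNorm_def]
  refine ContinuousLinearMap.opNorm_le_bound _ (norm_nonneg _) fun x => ?_
  set xi : Fin m → EuclideanSpace ℂ (Fin n) :=
    fun i => (WithLp.equiv 2 (Fin n → ℂ)).symm (fun j' => x (i, j')) with hxi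
  have hsq : ‖toEuclideanLin ((1 : Matrix (Fin m) (Fin m) ℂ) ⊗ₖ B) x‖ ^ 2
      ≤ (‖B‖ * ‖x‖) ^ 2 := by
    have h1 : ‖toEuclideanLin ((1 : Matrix (Fin m) (Fin m) ℂ) ⊗ₖ B) x‖ ^ 2
        = ∑ p : Fin m × Fin n,
            ‖(toEuclideanLin ((1 : Matrix (Fin m) (Fin m) ℂ) ⊗ₖ B) x) p‖ ^ 2 := by
      rw [EuclideanSpace.norm_eq, Real.sq_sqrt (by positivity)]
    have hentry : ∀ i j, (toEuclideanLin ((1 : Matrix (Fin m) (Fin m) ℂ) ⊗ₖ B) x) (i, j)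
        = (B *ᵥ (xi i)) j := by
      intro i j
      simp [toEuclideanLin_apply, Matrix.mulVec, dotProduct, Fintype.sum_prod_type,
        Matrix.one_apply, ite_mul, WithLp.equiv_symm_apply, hxi]
    have h2 : ∀ i : Fin m, ∑ j : Fin n, ‖(B *ᵥ (xi i)) j‖ ^ 2
        ≤ ‖B‖ ^ 2 * ∑ j : Fin n, ‖x (i, j)‖ ^ 2 := by
      intro i
      have hle := B.l2_opNorm_mulVec (xi i)
      have h3 : ‖(EuclideanSpace.equiv (Fin n) ℂ).symm (B *ᵥ (xi i))‖ ^ 2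
          = ∑ j : Fin n, ‖(B *ᵥ (xi i)) j‖ ^ 2 := by
        rw [EuclideanSpace.norm_eq, Real.sq_sqrt (by positivity)]
        rfl
      have h4 : ‖xi i‖ ^ 2 = ∑ j : Fin n, ‖x (i, j)‖ ^ 2 := by
        rw [EuclideanSpace.norm_eq, Real.sq_sqrt (by positivity)]
        rfl
      calc ∑ j : Fin n, ‖(B *ᵥ (xi i)) j‖ ^ 2
          = ‖(EuclideanSpace.equiv (Fin n) ℂ).symm (B *ᵥ (xi i))‖ ^ 2 := h3.symm
        _ ≤ (‖B‖ * ‖xi i‖) ^ 2 := pow_le_pow_left₀ (norm_nonneg _) hle 2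
        _ = ‖B‖ ^ 2 * ∑ j : Fin n, ‖x (i, j)‖ ^ 2 := by rw [mul_pow, h4]
    have hx2 : ‖x‖ ^ 2 = ∑ i : Fin m, ∑ j : Fin n, ‖x (i, j)‖ ^ 2 := by
      rw [EuclideanSpace.norm_eq, Real.sq_sqrt (by positivity), Fintype.sum_prod_type]
    calc ‖toEuclideanLin ((1 : Matrix (Fin m) (Fin m) ℂ) ⊗ₖ B) x‖ ^ 2
        = ∑ i : Fin m, ∑ j : Fin n, ‖(B *ᵥ (xi i)) j‖ ^ 2 := by
          rw [h1, Fintype.sum_prod_type]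
          exact Finset.sum_congr rfl fun i _ => Finset.sum_congr rfl fun j _ => by
            rw [hentry]
      _ ≤ ∑ i : Fin m, ‖B‖ ^ 2 * ∑ j : Fin n, ‖x (i, j)‖ ^ 2 :=
          Finset.sum_le_sum fun i _ => h2 i
      _ = (‖B‖ * ‖x‖) ^ 2 := by
          rw [← Finset.mul_sum, mul_pow, hx2]
  calc ‖toEuclideanLin ((1 : Matrix (Fin m) (Fin m) ℂ) ⊗ₖ B) x‖
      = Real.sqrt (‖toEuclideanLin ((1 : Matrix (Fin m) (Fin m) ℂ) ⊗ₖ B) x‖ ^ 2) :=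
        (Real.sqrt_sq (norm_nonneg _)).symm
    _ ≤ Real.sqrt ((‖B‖ * ‖x‖) ^ 2) := Real.sqrt_le_sqrt hsq
    _ = ‖B‖ * ‖x‖ := Real.sqrt_sq (by positivity)

lemma toEuclideanLin_le {p q : Type*} [Fintype p] [Fintype q] [DecidableEq q]
    (M : Matrix p q ℂ) (y : EuclideanSpace ℂ q) :
    ‖toEuclideanLin M y‖ ≤ ‖M‖ * ‖y‖ :=
  (LinearMap.toContinuousLinearMap (toEuclideanLin M)).le_opNorm y

theorem per_step_disentangling_bound (m n : ℕ)
    (O : Matrix (Fin m) (Fin m) ℂ)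
    (B : Matrix (Fin n) (Fin n) ℂ) (hB : IsUnit B)
    (ω : EuclideanSpace ℂ (Fin m × Fin n)) (hω : ‖ω‖ = 1)
    (P : Matrix (Fin n) (Fin n) ℂ) (hP : P = (B⁻¹)ᴴ * B⁻¹)
    (ε : ℝ) (hε : 0 ≤ ε)
    (hcluster :
      ‖⟪ω, toEuclideanLin (O ⊗ₖ P) ω⟫ -
          ⟪ω, toEuclideanLin (O ⊗ₖ (1 : Matrix (Fin n) (Fin n) ℂ)) ω⟫ *
          ⟪ω, toEuclideanLin ((1 : Matrix (Fin m) (Fin m) ℂ) ⊗ₖ P) ω⟫‖ ≤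
        ε * l2opNorm O * l2opNorm P)
    (ω' : EuclideanSpace ℂ (Fin m × Fin n))
    (hω' : ω' = ‖toEuclideanLin ((1 : Matrix (Fin m) (Fin m) ℂ) ⊗ₖ B⁻¹) ω‖⁻¹ •
                 toEuclideanLin ((1 : Matrix (Fin m) (Fin m) ℂ) ⊗ₖ B⁻¹) ω) :
    ‖⟪ω', toEuclideanLin (O ⊗ₖ (1 : Matrix (Fin n) (Fin n) ℂ)) ω'⟫ -
        ⟪ω, toEuclideanLin (O ⊗ₖ (1 : Matrix (Fin n) (Fin n) ℂ)) ω⟫‖ ≤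
      ε * l2opNorm O * (l2opNorm B * l2opNorm B⁻¹) ^ 2 := by
  classical
  have hBdet : IsUnit B.det := (Matrix.isUnit_iff_isUnit_det B).mp hB
  have hBB : B * B⁻¹ = 1 := Matrix.mul_nonsing_inv B hBdet
  set A : Matrix (Fin m × Fin n) (Fin m × Fin n) ℂ :=
    (1 : Matrix (Fin m) (Fin m) ℂ) ⊗ₖ B⁻¹ with hA
  set v : EuclideanSpace ℂ (Fin m × Fin n) := toEuclideanLin A ω with hv
  have hT : ∀ (M : Matrix (Fin m × Fin n) (Fin m × Fin n) ℂ)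
      (x : EuclideanSpace ℂ (Fin m × Fin n)),
      toEuclideanLin M x = toEuclideanCLM (𝕜 := ℂ) M x := fun _ _ => rfl
  have hAH : Aᴴ = (1 : Matrix (Fin m) (Fin m) ℂ) ⊗ₖ (B⁻¹)ᴴ := by
    rw [hA, kron_conjT, conjTranspose_one]
  have hid1 : Aᴴ * ((O ⊗ₖ (1 : Matrix (Fin n) (Fin n) ℂ)) * A) = O ⊗ₖ P := by
    rw [hAH, hA, ← mul_kronecker_mul, ← mul_kronecker_mul, hP]
    simp [Matrix.mul_one, Matrix.one_mul]
  have hid2 : Aᴴ * (((1 : Matrix (Fin m) (Fin m) ℂ) ⊗ₖ (1 : Matrix (Fin n) (Fin n) ℂ)) * A) =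
      (1 : Matrix (Fin m) (Fin m) ℂ) ⊗ₖ P := by
    rw [hAH, hA, ← mul_kronecker_mul, ← mul_kronecker_mul, hP]
    simp [Matrix.mul_one, Matrix.one_mul]
  have hinner : ∀ M : Matrix (Fin m × Fin n) (Fin m × Fin n) ℂ,
      ⟪ω, toEuclideanLin (Aᴴ * (M * A)) ω⟫ = ⟪v, toEuclideanLin M v⟫ := by
    intro M
    have hmul : toEuclideanCLM (𝕜 := ℂ) (Aᴴ * (M * A))
        = star (toEuclideanCLM (𝕜 := ℂ) A) *
          (toEuclideanCLM (𝕜 := ℂ) M * toEuclideanCLM (𝕜 := ℂ) A) := by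
      rw [_root_.map_mul, _root_.map_mul, ← Matrix.star_eq_conjTranspose, map_star]
    calc ⟪ω, toEuclideanLin (Aᴴ * (M * A)) ω⟫
        = ⟪ω, (star (toEuclideanCLM (𝕜 := ℂ) A) *
            (toEuclideanCLM (𝕜 := ℂ) M * toEuclideanCLM (𝕜 := ℂ) A)) ω⟫ := by
          rw [hT, hmul]
      _ = ⟪toEuclideanCLM (𝕜 := ℂ) A ω,
            toEuclideanCLM (𝕜 := ℂ) M (toEuclideanCLM (𝕜 := ℂ) A ω)⟫ := by
          rw [ContinuousLinearMap.mul_apply, ContinuousLinearMap.mul_apply,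
            ContinuousLinearMap.star_eq_adjoint, ContinuousLinearMap.adjoint_inner_right]
      _ = ⟪v, toEuclideanLin M v⟫ := rfl
  set a : ℂ := ⟪ω, toEuclideanLin (O ⊗ₖ P) ω⟫ with ha'
  set b : ℂ := ⟪ω, toEuclideanLin (O ⊗ₖ (1 : Matrix (Fin n) (Fin n) ℂ)) ω⟫ with hb'
  set d : ℂ := ⟪ω, toEuclideanLin ((1 : Matrix (Fin m) (Fin m) ℂ) ⊗ₖ P) ω⟫ with hd'
  have ha : a = ⟪v, toEuclideanLin (O ⊗ₖ (1 : Matrix (Fin n) (Fin n) ℂ)) v⟫ := by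
    rw [ha', ← hid1, hinner]
  have hone : toEuclideanLin ((1 : Matrix (Fin m) (Fin m) ℂ) ⊗ₖ
      (1 : Matrix (Fin n) (Fin n) ℂ)) v = v := by
    rw [Matrix.one_kronecker_one, hT, _root_.map_one, ContinuousLinearMap.one_apply]
  have hd : d = ⟪v, v⟫ := by
    rw [hd', ← hid2, hinner, hone]
  set N : ℝ := ‖v‖ with hN'
  have hdN : d = (N : ℂ) ^ 2 := by rw [hd, inner_self_eq_norm_sq_to_K, ← hN']; rfl
  have hrec : toEuclideanLin ((1 : Matrix (Fin m) (Fin m) ℂ) ⊗ₖ B) v = ω := by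
    rw [hv, hT, hT, ← ContinuousLinearMap.mul_apply, ← _root_.map_mul, hA,
      ← mul_kronecker_mul, hBB, Matrix.one_mul, Matrix.one_kronecker_one,
      _root_.map_one, ContinuousLinearMap.one_apply]
  have hBN : 1 ≤ ‖B‖ * N := by
    calc (1:ℝ) = ‖ω‖ := hω.symm
      _ = ‖toEuclideanLin ((1 : Matrix (Fin m) (Fin m) ℂ) ⊗ₖ B) v‖ := by rw [hrec]
      _ ≤ ‖(1 : Matrix (Fin m) (Fin m) ℂ) ⊗ₖ B‖ * N := toEuclideanLin_le _ v
      _ ≤ ‖B‖ * N := mul_le_mul_of_nonneg_right (norm_one_kron_le m n B) (norm_nonneg v)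
  have hNpos : 0 < N := by
    by_contra h
    push_neg at h
    have : ‖B‖ * N ≤ 0 := mul_nonpos_of_nonneg_of_nonpos (norm_nonneg B) h
    linarith
  have hdne : d ≠ 0 := by
    rw [hdN]
    exact pow_ne_zero 2 (by exact_mod_cast hNpos.ne')
  -- value of the new expectation
  have hS' : ⟪ω', toEuclideanLin (O ⊗ₖ (1 : Matrix (Fin n) (Fin n) ℂ)) ω'⟫ = a / d := by
    have hco : ω' = ((N⁻¹ : ℝ) : ℂ) • v := by
      rw [hω', Complex.coe_smul]
    rw [hco, inner_smul_left, LinearMap.map_smul, inner_smul_right, ← ha, hdN]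
    rw [Complex.conj_ofReal]
    push_cast
    field_simp
  rw [hS']
  have habs : ‖a / d - b‖ = ‖a - b * d‖ / (N ^ 2) := by
    rw [div_sub' hdne, norm_div, hdN]
    congr 1
    · ring_nf
    · rw [← Complex.ofReal_pow, Complex.norm_real, Real.norm_eq_abs, abs_of_pos (by positivity)]
  rw [habs]
  have hPnorm : l2opNorm P = ‖B⁻¹‖ * ‖B⁻¹‖ := by
    rw [l2opNorm_eq_norm, hP]
    exact l2_opNorm_conjTranspose_mul_self _
  have hkey : l2opNorm P ≤ (l2opNorm B * l2opNorm B⁻¹) ^ 2 * N ^ 2 := by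
    rw [hPnorm, l2opNorm_eq_norm, l2opNorm_eq_norm]
    nlinarith [norm_nonneg B⁻¹, norm_nonneg B, hNpos.le, hBN,
      mul_le_mul hBN hBN (by norm_num) (by positivity)]
  have hOnn : 0 ≤ ε * l2opNorm O := mul_nonneg hε (norm_nonneg _)
  rw [div_le_iff₀ (by positivity)]
  calc ‖a - b * d‖ ≤ ε * l2opNorm O * l2opNorm P := hcluster
    _ ≤ ε * l2opNorm O * ((l2opNorm B * l2opNorm B⁻¹) ^ 2 * N ^ 2) :=
        mul_le_mul_of_nonneg_left hkey hOnn
    _ = ε * l2opNorm O * (l2opNorm B * l2opNorm B⁻¹) ^ 2 * N ^ 2 := by ring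
end

section
/- Let V = ℂⁿ with the standard complex inner product, let T be an n×n complex matrix, let N be a natural number, and let ω_0, ω_1, …, ω_N be unit vectors in V. Suppose there are invertible n×n complex matrices C_1, …, C_N such that for each i ∈ {1,…,N}: (a) C_i and C_iᴴ both commute with T; (b) ω_{i−1} = C_i⁻¹ ω_i / ‖C_i⁻¹ ω_i‖; and (c) the clustering bound |⟨ω_i, T (C_i⁻¹)ᴴ C_i⁻¹ ω_i⟩ − ⟨ω_i, T ω_i⟩ · ⟨ω_i, (C_i⁻¹)ᴴ C_i⁻¹ ω_i⟩| ≤ δ · ‖T‖ · ‖(C_i⁻¹)ᴴ C_i⁻¹‖ holds for some δ ≥ 0. Let κ_* = max over i of ‖C_i‖·‖C_i⁻¹‖. Then |⟨ω_0, T ω_0⟩ − ⟨ω_N, T ω_N⟩| ≤ N · δ · ‖T‖ · κ_*². -/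
open Matrix
open scoped ComplexInnerProductSpace

section Aux
open scoped Matrix.Norms.L2Operator
variable {a : ℕ}

lemma l2opNorm_eq_norm_s4 (M : Matrix (Fin a) (Fin a) ℂ) : l2opNorm M = ‖M‖ := rfl

lemma l2opNorm_nonneg (M : Matrix (Fin a) (Fin a) ℂ) : 0 ≤ l2opNorm M :=
  norm_nonneg _

lemma l2opNorm_conjTranspose_mul_self (M : Matrix (Fin a) (Fin a) ℂ) :
    l2opNorm (Mᴴ * M) = l2opNorm M * l2opNorm M := by
  simp only [l2opNorm_eq_norm_s4]
  exact Matrix.l2_opNorm_conjTranspose_mul_self M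

lemma toEL_mul (A B : Matrix (Fin a) (Fin a) ℂ) (v : EuclideanSpace ℂ (Fin a)) :
    Matrix.toEuclideanLin (A * B) v = Matrix.toEuclideanLin A (Matrix.toEuclideanLin B v) := by
  simp [Matrix.toEuclideanLin_apply, Matrix.mulVec_mulVec]

lemma toEL_one (v : EuclideanSpace ℂ (Fin a)) :
    Matrix.toEuclideanLin (1 : Matrix (Fin a) (Fin a) ℂ) v = v := by
  simp [Matrix.toEuclideanLin_apply]

lemma toEL_le (M : Matrix (Fin a) (Fin a) ℂ) (v : EuclideanSpace ℂ (Fin a)) :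
    ‖Matrix.toEuclideanLin M v‖ ≤ l2opNorm M * ‖v‖ :=
  (LinearMap.toContinuousLinearMap (Matrix.toEuclideanLin M)).le_opNorm v

lemma inv_comm_of_comm {B T : Matrix (Fin a) (Fin a) ℂ} (hB : IsUnit B)
    (h : B * T = T * B) : B⁻¹ * T = T * B⁻¹ := by
  have hdet : IsUnit B.det := (Matrix.isUnit_iff_isUnit_det _).mp hB
  have hBA : B * B⁻¹ = 1 := Matrix.mul_nonsing_inv _ hdet
  have hAB : B⁻¹ * B = 1 := Matrix.nonsing_inv_mul _ hdet
  have h2 : B⁻¹ * (T * B) * B⁻¹ = B⁻¹ * T := by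
    rw [Matrix.mul_assoc, Matrix.mul_assoc, hBA, Matrix.mul_one]
  have h1 : B⁻¹ * (B * T) * B⁻¹ = T * B⁻¹ := by
    rw [← Matrix.mul_assoc, hAB, Matrix.one_mul]
  rw [← h2, ← h, h1]

lemma telescope_fin : ∀ (N : ℕ) (f : Fin (N + 1) → ℂ),
    ∑ i : Fin N, (f i.castSucc - f i.succ) = f 0 - f (Fin.last N) := by
  intro N
  induction N with
  | zero => intro f; simp [Fin.last]
  | succ N ih =>
    intro f
    rw [Fin.sum_univ_castSucc]
    have h := ih (fun j => f j.castSucc)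
    simp only [Fin.succ_castSucc] at h ⊢
    rw [h]
    simp only [Fin.succ_last, Fin.castSucc_zero]
    abel
end Aux

set_option maxHeartbeats 1000000 in
theorem iterated_disentangling_bound (n N : ℕ)
    (T : Matrix (Fin n) (Fin n) ℂ)
    (ω : Fin (N + 1) → EuclideanSpace ℂ (Fin n)) (hω : ∀ i, ‖ω i‖ = 1)
    (C : Fin N → Matrix (Fin n) (Fin n) ℂ) (hC : ∀ i, IsUnit (C i))
    (hcomm : ∀ i, C i * T = T * C i)
    (hcommH : ∀ i, (C i)ᴴ * T = T * (C i)ᴴ)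
    (hstep : ∀ i : Fin N, ω i.castSucc =
      ‖toEuclideanLin (C i)⁻¹ (ω i.succ)‖⁻¹ • toEuclideanLin (C i)⁻¹ (ω i.succ))
    (δ : ℝ) (hδ : 0 ≤ δ)
    (hcluster : ∀ i : Fin N,
      ‖(⟪ω i.succ, toEuclideanLin (T * (((C i)⁻¹)ᴴ * (C i)⁻¹)) (ω i.succ)⟫ -
            ⟪ω i.succ, toEuclideanLin T (ω i.succ)⟫ *
            ⟪ω i.succ, toEuclideanLin (((C i)⁻¹)ᴴ * (C i)⁻¹) (ω i.succ)⟫)‖ ≤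
        δ * l2opNorm T * l2opNorm (((C i)⁻¹)ᴴ * (C i)⁻¹))
    (κ : ℝ) (hκ : κ = ⨆ i : Fin N, l2opNorm (C i) * l2opNorm (C i)⁻¹) :
    ‖(⟪ω 0, toEuclideanLin T (ω 0)⟫ -
        ⟪ω (Fin.last N), toEuclideanLin T (ω (Fin.last N))⟫)‖ ≤
      N * δ * l2opNorm T * κ ^ 2 := by
  classical
  set f : Fin (N + 1) → ℂ := fun j => ⟪ω j, toEuclideanLin T (ω j)⟫ with hf
  have key : ∀ i : Fin N, ‖f i.castSucc - f i.succ‖ ≤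
      δ * l2opNorm T * κ ^ 2 := by
    intro i
    set A : Matrix (Fin n) (Fin n) ℂ := (C i)⁻¹ with hA
    set ψ : EuclideanSpace ℂ (Fin n) := ω i.succ with hψ
    have hdet : IsUnit (C i).det := (Matrix.isUnit_iff_isUnit_det _).mp (hC i)
    have hCA : C i * A = 1 := Matrix.mul_nonsing_inv _ hdet
    have hTA : A * T = T * A := inv_comm_of_comm (hC i) (hcomm i)
    have hCH : IsUnit (C i)ᴴ := by
      rw [Matrix.isUnit_iff_isUnit_det, Matrix.det_conjTranspose]
      exact hdet.star
    have hTAH : Aᴴ * T = T * Aᴴ := by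
      rw [hA, Matrix.conjTranspose_nonsing_inv]
      exact inv_comm_of_comm hCH (hcommH i)
    set r : ℝ := ‖toEuclideanLin A ψ‖ with hr
    have hψ1 : ‖ψ‖ = 1 := hω _
    have hrec : toEuclideanLin (C i) (toEuclideanLin A ψ) = ψ := by
      rw [← toEL_mul, hCA, toEL_one]
    have hrpos : 0 < r := by
      rcases eq_or_ne (toEuclideanLin A ψ) 0 with h | h
      · exfalso
        rw [h, map_zero] at hrec
        rw [← hrec, norm_zero] at hψ1
        norm_num at hψ1
      · exact norm_pos_iff.mpr h
    have hr1 : 1 ≤ l2opNorm (C i) * r := by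
      calc (1 : ℝ) = ‖ψ‖ := hψ1.symm
        _ = ‖toEuclideanLin (C i) (toEuclideanLin A ψ)‖ := by rw [hrec]
        _ ≤ l2opNorm (C i) * r := toEL_le _ _
    have hrinv : r⁻¹ ≤ l2opNorm (C i) := by
      nlinarith [inv_mul_cancel₀ hrpos.ne', inv_pos.mpr hrpos]
    have hadj : Matrix.toEuclideanLin Aᴴ = LinearMap.adjoint (Matrix.toEuclideanLin A) :=
      Matrix.toEuclideanLin_conjTranspose_eq_adjoint A
    have hZ : ⟪ψ, toEuclideanLin (Aᴴ * A) ψ⟫ = ((r : ℂ)) ^ 2 := by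
      rw [toEL_mul, hadj, LinearMap.adjoint_inner_right, inner_self_eq_norm_sq_to_K, hr]
      norm_cast
    have hX : ⟪toEuclideanLin A ψ, toEuclideanLin T (toEuclideanLin A ψ)⟫ =
        ⟪ψ, toEuclideanLin (T * (Aᴴ * A)) ψ⟫ := by
      have hmat : T * (Aᴴ * A) = Aᴴ * (T * A) := by
        rw [← Matrix.mul_assoc, ← hTAH, Matrix.mul_assoc]
      rw [hmat, toEL_mul, hadj, LinearMap.adjoint_inner_right, toEL_mul]
    have hrne : ((r : ℂ)) ^ 2 ≠ 0 := by
      simp [pow_eq_zero_iff, Complex.ofReal_eq_zero, hrpos.ne']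
    have hφ : f i.castSucc = (((r : ℂ)) ^ 2)⁻¹ * ⟪ψ, toEuclideanLin (T * (Aᴴ * A)) ψ⟫ := by
      simp only [hf]
      rw [hstep i, ← hψ, ← hA, ← hr]
      rw [RCLike.real_smul_eq_coe_smul (K := ℂ), _root_.map_smul, inner_smul_real_left,
        inner_smul_real_right, ← hX, smul_smul]
      rw [Complex.real_smul]
      push_cast
      rw [hX]
      ring
    have hdiff : f i.castSucc - f i.succ =
        (((r : ℂ)) ^ 2)⁻¹ * (⟪ψ, toEuclideanLin (T * (Aᴴ * A)) ψ⟫ -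
          ⟪ψ, toEuclideanLin T ψ⟫ * ⟪ψ, toEuclideanLin (Aᴴ * A) ψ⟫) := by
      rw [hφ, hZ]
      have : f i.succ = ⟪ψ, toEuclideanLin T ψ⟫ := rfl
      rw [this]
      rw [mul_sub, mul_comm ⟪ψ, toEuclideanLin T ψ⟫, inv_mul_cancel_left₀ hrne]
    have habs : ‖f i.castSucc - f i.succ‖ =
        (r ^ 2)⁻¹ * ‖⟪ψ, toEuclideanLin (T * (Aᴴ * A)) ψ⟫ -
          ⟪ψ, toEuclideanLin T ψ⟫ * ⟪ψ, toEuclideanLin (Aᴴ * A) ψ⟫‖ := by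
      rw [hdiff, norm_mul, norm_inv, norm_pow, Complex.norm_real, Real.norm_eq_abs, abs_of_pos hrpos]
    have hclu := hcluster i
    rw [← hA, ← hψ] at hclu
    have hDnorm : l2opNorm (Aᴴ * A) = l2opNorm A * l2opNorm A :=
      l2opNorm_conjTranspose_mul_self A
    have hκi : l2opNorm (C i) * l2opNorm A ≤ κ := by
      rw [hκ]
      exact le_ciSup (f := fun j : Fin N => l2opNorm (C j) * l2opNorm (C j)⁻¹) (Set.Finite.bddAbove (Set.finite_range _)) i
    have hAnn : 0 ≤ l2opNorm A := l2opNorm_nonneg A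
    have hCnn : 0 ≤ l2opNorm (C i) := l2opNorm_nonneg (C i)
    have hTnn : 0 ≤ l2opNorm T := l2opNorm_nonneg T
    have hrinv_nn : 0 ≤ r⁻¹ := le_of_lt (inv_pos.mpr hrpos)
    calc ‖f i.castSucc - f i.succ‖
        = (r ^ 2)⁻¹ * ‖⟪ψ, toEuclideanLin (T * (Aᴴ * A)) ψ⟫ -
            ⟪ψ, toEuclideanLin T ψ⟫ * ⟪ψ, toEuclideanLin (Aᴴ * A) ψ⟫‖ := habs
      _ ≤ (r ^ 2)⁻¹ * (δ * l2opNorm T * l2opNorm (Aᴴ * A)) := by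
          exact mul_le_mul_of_nonneg_left hclu (inv_nonneg.mpr (pow_nonneg hrpos.le 2))
      _ = (r⁻¹) ^ 2 * (δ * l2opNorm T * (l2opNorm A * l2opNorm A)) := by
          rw [hDnorm, inv_pow]
      _ ≤ (l2opNorm (C i)) ^ 2 * (δ * l2opNorm T * (l2opNorm A * l2opNorm A)) := by
          exact mul_le_mul_of_nonneg_right (pow_le_pow_left₀ hrinv_nn hrinv 2)
            (mul_nonneg (mul_nonneg hδ hTnn) (mul_nonneg hAnn hAnn))
      _ = δ * l2opNorm T * (l2opNorm (C i) * l2opNorm A) ^ 2 := by ring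
      _ ≤ δ * l2opNorm T * κ ^ 2 := by
          exact mul_le_mul_of_nonneg_left (pow_le_pow_left₀ (mul_nonneg hCnn hAnn) hκi 2)
            (mul_nonneg hδ hTnn)
  have tel := telescope_fin N f
  calc ‖f 0 - f (Fin.last N)‖
      = ‖∑ i : Fin N, (f i.castSucc - f i.succ)‖ := by rw [tel]
    _ ≤ ∑ i : Fin N, ‖f i.castSucc - f i.succ‖ :=
        norm_sum_le _ _
    _ ≤ ∑ _i : Fin N, (δ * l2opNorm T * κ ^ 2) := Finset.sum_le_sum fun i _ => key i
    _ = N * δ * l2opNorm T * κ ^ 2 := by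
        rw [Finset.sum_const, Finset.card_univ, Fintype.card_fin, nsmul_eq_mul]
        ring
end

section
/- Let M be an n×n complex matrix admitting a biorthonormal eigensystem: vectors r_0, …, r_{n−1} and l_0, …, l_{n−1} in ℂⁿ and complex numbers λ_0, …, λ_{n−1} with M = Σ_j λ_j · r_j l_jᴴ and ⟨l_i, r_j⟩ = δ_{ij}, where λ_0 = 1 and |λ_j| ≤ q for all j ≠ 0, for some q ≥ 0. Then for all n×n complex matrices A, B and every natural number x ≥ 1, |⟨l_0, A M^x B r_0⟩ − ⟨l_0, A r_0⟩ · ⟨l_0, B r_0⟩| ≤ q^x · Σ_{j ≠ 0} |⟨l_0, A r_j⟩| · |⟨l_j, B r_0⟩|. -/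
open Matrix
open scoped ComplexInnerProductSpace

private lemma vecMulVec_mulVec' {k : ℕ} (w v x : Fin k → ℂ) :
    (vecMulVec w v) *ᵥ x = (v ⬝ᵥ x) • w := by
  ext i
  simp only [mulVec, vecMulVec_apply, dotProduct, Pi.smul_apply, smul_eq_mul, Finset.sum_mul]
  exact Finset.sum_congr rfl fun j _ => by ring

private lemma sum_mulVec'' {k : ℕ} (C : Fin k → Matrix (Fin k) (Fin k) ℂ) (v : Fin k → ℂ) :
    (∑ j, C j) *ᵥ v = ∑ j, (C j) *ᵥ v := by
  ext i
  simp only [mulVec, dotProduct, Matrix.sum_apply, Finset.sum_apply, Finset.sum_mul]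
  rw [Finset.sum_comm]

private lemma dotProduct_sum'' {k : ℕ} (u : Fin k → ℂ) (f : Fin k → Fin k → ℂ) :
    u ⬝ᵥ (∑ j, f j) = ∑ j, u ⬝ᵥ f j := by
  simp only [dotProduct, Finset.sum_apply, Finset.mul_sum]
  rw [Finset.sum_comm]

private lemma vecMulVec_mul_vecMulVec' {k : ℕ} (a b c d : Fin k → ℂ) :
    vecMulVec a b * vecMulVec c d = (b ⬝ᵥ c) • vecMulVec a d := by
  ext i j
  simp only [mul_apply, vecMulVec_apply, Matrix.smul_apply, dotProduct, smul_eq_mul, Finset.sum_mul]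
  exact Finset.sum_congr rfl fun m _ => by ring

theorem clustering_of_transfer_operator_gap (n : ℕ)
    (M : Matrix (Fin (n + 1)) (Fin (n + 1)) ℂ)
    (r l : Fin (n + 1) → EuclideanSpace ℂ (Fin (n + 1)))
    (lam : Fin (n + 1) → ℂ)
    (hM : M = ∑ j, lam j • Matrix.vecMulVec (r j) (star (l j)))
    (hbiortho : ∀ i j, ⟪l i, r j⟫ = if i = j then 1 else 0)
    (hlam0 : lam 0 = 1)
    (q : ℝ) (hq : 0 ≤ q) (hgap : ∀ j : Fin (n + 1), j ≠ 0 → ‖lam j‖ ≤ q) :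
    ∀ (A B : Matrix (Fin (n + 1)) (Fin (n + 1)) ℂ) (x : ℕ), 1 ≤ x →
      ‖⟪l 0, toEuclideanLin (A * M ^ x * B) (r 0)⟫ -
          ⟪l 0, toEuclideanLin A (r 0)⟫ * ⟪l 0, toEuclideanLin B (r 0)⟫‖ ≤
        q ^ x * ∑ j ∈ Finset.univ.erase 0,
          ‖⟪l 0, toEuclideanLin A (r j)⟫‖ *
          ‖⟪l j, toEuclideanLin B (r 0)⟫‖ := by
  intro A B x hx
  set P : Fin (n + 1) → Matrix (Fin (n + 1)) (Fin (n + 1)) ℂ :=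
    fun j => vecMulVec (r j) (star (l j)) with hP
  -- biorthogonality as dot products
  have hdot : ∀ i j, (star (l i : Fin (n + 1) → ℂ)) ⬝ᵥ (r j : Fin (n + 1) → ℂ)
      = if i = j then 1 else 0 := fun i j =>
      (dotProduct_comm _ _).trans ((EuclideanSpace.inner_eq_star_dotProduct _ _).symm.trans (hbiortho i j))
  have hPP : ∀ j k, P j * P k = if j = k then P j else 0 := by
    intro j k
    rw [hP, vecMulVec_mul_vecMulVec', hdot]
    by_cases h : j = k
    · subst h; simp
    · simp [h]
  -- M ^ x formula
  have hMx : M ^ x = ∑ j, lam j ^ x • P j := by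
    clear hgap
    induction x with
    | zero => omega
    | succ m ih =>
      rcases Nat.eq_or_lt_of_le hx with h1 | h1
      · rw [← h1]
        simpa [pow_one] using hM
      · have hm : 1 ≤ m := by omega
        rw [pow_succ, ih hm, hM, Finset.sum_mul_sum]
        rw [Finset.sum_comm]
        refine Finset.sum_congr rfl fun k _ => ?_
        rw [Finset.sum_eq_single k]
        · rw [smul_mul_assoc, mul_smul_comm, hPP, if_pos rfl, smul_smul, ← pow_succ]
        · intro j _ hjk
          rw [smul_mul_assoc, mul_smul_comm, hPP, if_neg hjk, smul_zero, smul_zero]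
        · intro h; exact absurd (Finset.mem_univ k) h
  -- the scalar expansion
  have key : ∀ C : Matrix (Fin (n + 1)) (Fin (n + 1)) ℂ, ∀ v : EuclideanSpace ℂ (Fin (n + 1)),
      ∀ u : EuclideanSpace ℂ (Fin (n + 1)),
      ⟪u, toEuclideanLin C v⟫ = (star (u : Fin (n + 1) → ℂ)) ⬝ᵥ C *ᵥ (v : Fin (n + 1) → ℂ) :=
    fun _ _ _ => (EuclideanSpace.inner_eq_star_dotProduct _ _).trans (dotProduct_comm _ _)
  have expand : ⟪l 0, toEuclideanLin (A * M ^ x * B) (r 0)⟫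
      = ∑ j, lam j ^ x * (⟪l 0, toEuclideanLin A (r j)⟫ * ⟪l j, toEuclideanLin B (r 0)⟫) := by
    rw [key, hMx, Matrix.mul_sum, Matrix.sum_mul, sum_mulVec'', dotProduct_sum'']
    refine Finset.sum_congr rfl fun j _ => ?_
    rw [key, key]
    rw [mul_smul_comm, smul_mul_assoc, smul_mulVec, dotProduct_smul]
    rw [Matrix.mul_assoc, ← mulVec_mulVec, ← mulVec_mulVec, hP, vecMulVec_mulVec']
    rw [mulVec_smul, dotProduct_smul]
    simp only [smul_eq_mul]
    ring
  -- separate j = 0 term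
  have h0 : lam 0 ^ x * (⟪l 0, toEuclideanLin A (r 0)⟫ * ⟪l 0, toEuclideanLin B (r 0)⟫)
      = ⟪l 0, toEuclideanLin A (r 0)⟫ * ⟪l 0, toEuclideanLin B (r 0)⟫ := by
    rw [hlam0, one_pow, one_mul]
  have hsplit : ⟪l 0, toEuclideanLin (A * M ^ x * B) (r 0)⟫
      - ⟪l 0, toEuclideanLin A (r 0)⟫ * ⟪l 0, toEuclideanLin B (r 0)⟫
      = ∑ j ∈ Finset.univ.erase 0,
          lam j ^ x * (⟪l 0, toEuclideanLin A (r j)⟫ * ⟪l j, toEuclideanLin B (r 0)⟫) := by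
    rw [expand, ← Finset.add_sum_erase _ _ (Finset.mem_univ 0), h0, add_sub_cancel_left]
  rw [hsplit, Finset.mul_sum]
  refine le_trans (norm_sum_le _ _) ?_
  refine Finset.sum_le_sum fun j hj => ?_
  · 
    have hj0 : j ≠ 0 := Finset.ne_of_mem_erase hj
    rw [norm_mul, norm_mul, norm_pow]
    exact mul_le_mul_of_nonneg_right
      (pow_le_pow_left₀ (norm_nonneg _) (hgap j hj0) x) (by positivity)
end
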